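/- The number of indecomposable permutations with exactly k inversions avoiding 321 equals the number of parallelogram polyominoes with k cells. -/

import Mathlib

def inversions {n : ℕ} (π : Equiv.Perm (Fin n)) : ℕ :=
  (Finset.univ.filter fun p : Fin n × Fin n => p.1 < p.2 ∧ π p.2 < π p.1).card

def Decomposable {n : ℕ} (π : Equiv.Perm (Fin n)) : Prop :=
  ∃ j : ℕ, 0 < j ∧ j < n ∧ ∀ i : Fin n, (i : ℕ) < j → (π i : ℕ) < j

def Indecomposable {n : ℕ} (π : Equiv.Perm (Fin n)) : Prop :=
  0 < n ∧ ¬ Decomposable π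

def invTable {n : ℕ} (π : Equiv.Perm (Fin n)) (i : Fin n) : ℕ :=
  (Finset.univ.filter fun j : Fin n => i < j ∧ π j < π i).card

def Avoids123 {n : ℕ} (π : Equiv.Perm (Fin n)) : Prop :=
  ¬ ∃ i j k : Fin n, i < j ∧ j < k ∧ π i < π j ∧ π j < π k

def Avoids132 {n : ℕ} (π : Equiv.Perm (Fin n)) : Prop :=
  ¬ ∃ i j k : Fin n, i < j ∧ j < k ∧ π i < π k ∧ π k < π j

def Avoids213 {n : ℕ} (π : Equiv.Perm (Fin n)) : Prop :=
  ¬ ∃ i j k : Fin n, i < j ∧ j < k ∧ π j < π i ∧ π i < π k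

def Avoids231 {n : ℕ} (π : Equiv.Perm (Fin n)) : Prop :=
  ¬ ∃ i j k : Fin n, i < j ∧ j < k ∧ π k < π i ∧ π i < π j

def Avoids312 {n : ℕ} (π : Equiv.Perm (Fin n)) : Prop :=
  ¬ ∃ i j k : Fin n, i < j ∧ j < k ∧ π j < π k ∧ π k < π i

def Avoids321 {n : ℕ} (π : Equiv.Perm (Fin n)) : Prop :=
  ¬ ∃ i j k : Fin n, i < j ∧ j < k ∧ π k < π j ∧ π j < π i

def LTRMax {n : ℕ} (π : Equiv.Perm (Fin n)) (k : Fin n) : Prop :=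
  ∀ i : Fin n, i < k → π i < π k

def revComp {n : ℕ} (π : Equiv.Perm (Fin n)) : Equiv.Perm (Fin n) :=
  Fin.revPerm * π * Fin.revPerm

/-- A parallelogram polyomino given by its pair of boundary sequences: two weakly
increasing nonnegative sequences `ℓ`, `r` of equal length with `ℓ₁ = 0`,
`ℓᵢ < rᵢ` and `ℓᵢ₊₁ < rᵢ`; its number of cells is `Σ (rᵢ - ℓᵢ)`. -/
def IsPPolyomino (k : ℕ) (l r : List ℕ) : Prop :=
  l.length = r.length ∧
  l.Pairwise (· ≤ ·) ∧ r.Pairwise (· ≤ ·) ∧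
  (l ≠ [] → l.headI = 0) ∧
  (∀ i, i < l.length → l.getD i 0 < r.getD i 0) ∧
  (∀ i, i + 1 < l.length → l.getD (i + 1) 0 < r.getD i 0) ∧
  (∑ i ∈ Finset.range l.length, (r.getD i 0 - l.getD i 0)) = k

namespace PP

def cntP (a : List ℕ) (x : ℕ) : ℕ :=
  ((Finset.range a.length).filter fun t => a.getD t 0 + t ≤ x).card

def cntV (a : List ℕ) (m : ℕ) : ℕ :=
  ((Finset.range a.length).filter fun t => a.getD t 0 ≤ m).card

/-- the permutation formula: positions enumerated by `a`-points map to `b`-points,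
non-points map via complement enumeration. -/
def Fm (a b : List ℕ) (x : ℕ) : ℕ :=
  if 0 < cntP a x ∧ a.getD (cntP a x - 1) 0 + (cntP a x - 1) = x
  then b.getD (cntP a x - 1) 0 + (cntP a x - 1)
  else (x - cntP a x) + cntV b (x - cntP a x)

def Mono (a : List ℕ) : Prop := ∀ i j : ℕ, i ≤ j → j < a.length → a.getD i 0 ≤ a.getD j 0

def IsPt (a : List ℕ) (x : ℕ) : Prop := ∃ j, j < a.length ∧ a.getD j 0 + j = x

lemma mem_iff_lt_card {S : Finset ℕ} (h : ∀ i j : ℕ, i ≤ j → j ∈ S → i ∈ S) (t : ℕ) :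
    t ∈ S ↔ t < S.card := by
  constructor
  · intro ht
    by_contra hc
    push_neg at hc
    have hsub : Finset.range (t+1) ⊆ S := fun i hi =>
      h i t (Nat.lt_succ_iff.mp (Finset.mem_range.mp hi)) ht
    have := Finset.card_le_card hsub
    simp [Finset.card_range] at this
    omega
  · intro ht
    by_contra hc
    have hsub : S ⊆ Finset.range t := by
      intro x hx
      rw [Finset.mem_range]
      by_contra hx2
      exact hc (h t x (le_of_not_gt hx2) hx)
    have := Finset.card_le_card hsub
    simp [Finset.card_range] at this
    omega

lemma cntP_le_length (a : List ℕ) (x : ℕ) : cntP a x ≤ a.length := by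
  calc cntP a x ≤ (Finset.range a.length).card := Finset.card_le_card (Finset.filter_subset _ _)
  _ = a.length := Finset.card_range _

lemma cntV_le_length (a : List ℕ) (m : ℕ) : cntV a m ≤ a.length := by
  calc cntV a m ≤ (Finset.range a.length).card := Finset.card_le_card (Finset.filter_subset _ _)
  _ = a.length := Finset.card_range _

lemma lt_cntP_iff {a : List ℕ} (ha : Mono a) {x t : ℕ} (ht : t < a.length) :
    t < cntP a x ↔ a.getD t 0 + t ≤ x := by
  unfold cntP
  rw [← mem_iff_lt_card (fun i j hij hj => ?_) t, Finset.mem_filter, Finset.mem_range]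
  · tauto
  · rw [Finset.mem_filter, Finset.mem_range] at *
    refine ⟨lt_of_le_of_lt hij hj.1, ?_⟩
    have := ha i j hij hj.1
    omega

lemma lt_cntV_iff {a : List ℕ} (ha : Mono a) {m t : ℕ} (ht : t < a.length) :
    t < cntV a m ↔ a.getD t 0 ≤ m := by
  unfold cntV
  rw [← mem_iff_lt_card (fun i j hij hj => ?_) t, Finset.mem_filter, Finset.mem_range]
  · tauto
  · rw [Finset.mem_filter, Finset.mem_range] at *
    exact ⟨lt_of_le_of_lt hij hj.1, le_trans (ha i j hij hj.1) hj.2⟩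

/-- points are strictly increasing -/
lemma pt_strictMono {a : List ℕ} (ha : Mono a) {i j : ℕ} (hij : i < j) (hj : j < a.length) :
    a.getD i 0 + i < a.getD j 0 + j := by
  have := ha i j (le_of_lt hij) hj
  omega

lemma cntP_pt {a : List ℕ} (ha : Mono a) {j : ℕ} (hj : j < a.length) :
    cntP a (a.getD j 0 + j) = j + 1 := by
  have h1 : j < cntP a (a.getD j 0 + j) := (lt_cntP_iff ha hj).mpr le_rfl
  have h2 : ¬ (j + 1 < cntP a (a.getD j 0 + j)) := by
    intro hc
    have hlen : j + 1 < a.length := lt_of_lt_of_le hc (cntP_le_length a _)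
    have := (lt_cntP_iff ha hlen).mp hc
    have := ha j (j+1) (Nat.le_succ j) hlen
    omega
  omega

lemma cntV_mono (a : List ℕ) {m m' : ℕ} (h : m ≤ m') : cntV a m ≤ cntV a m' := by
  apply Finset.card_le_card
  intro t ht
  rw [Finset.mem_filter] at *
  exact ⟨ht.1, le_trans ht.2 h⟩

/-- E4: the complement enumeration is strictly monotone -/
lemma enum_strictMono (a : List ℕ) {m m' : ℕ} (h : m < m') :
    m + cntV a m < m' + cntV a m' := by
  have := cntV_mono a (le_of_lt h)
  omega

/-- E3: `m + cntV a m` is never a point, and its `cntP` equals `cntV a m`. -/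
lemma enum_not_pt {a : List ℕ} (ha : Mono a) (m : ℕ) :
    ¬ IsPt a (m + cntV a m) := by
  rintro ⟨j, hj, hjeq⟩
  rcases lt_or_ge j (cntV a m) with h | h
  · have h1 : a.getD j 0 ≤ m := (lt_cntV_iff ha hj).mp h
    omega
  · have h1 : ¬ (a.getD j 0 ≤ m) := fun hc => absurd ((lt_cntV_iff ha hj).mpr hc) (not_lt.mpr h)
    have h2 : cntV a m ≤ j := h
    omega

lemma cntP_enum {a : List ℕ} (ha : Mono a) (m : ℕ) :
    cntP a (m + cntV a m) = cntV a m := by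
  set c := cntV a m with hc
  have hcle : c ≤ a.length := cntV_le_length a m
  have h2 : ∀ t, t < c → t < cntP a (m + c) := by
    intro t htc
    have htlen : t < a.length := lt_of_lt_of_le htc hcle
    have := (lt_cntV_iff (m := m) ha htlen).mp (by rw [← hc]; omega)
    exact (lt_cntP_iff (x := m + c) ha htlen).mpr (by omega)
  rcases Nat.lt_or_ge c a.length with hlen | hlen
  · have h1 : ¬ (c < cntP a (m + c)) := by
      intro hcon
      have hgc := (lt_cntP_iff (x := m + c) ha hlen).mp hcon
      have hcc : a.getD c 0 ≤ m := by omega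
      have := (lt_cntV_iff (m := m) ha hlen).mpr hcc
      omega
    rcases Nat.eq_zero_or_pos c with h0 | h0
    · omega
    · have := h2 (c-1) (by omega)
      omega
  · have hceq : c = a.length := le_antisymm hcle hlen
    have h3 : cntP a (m + c) ≤ c := hceq ▸ cntP_le_length a _
    rcases Nat.eq_zero_or_pos c with h0 | h0
    · omega
    · have := h2 (c-1) (by omega)
      omega

/-- E2: for a non-point `x`, with `i = cntP a x`, we have `i ≤ x`,
`cntV a (x - i) = i` and `(x - i) + cntV a (x-i) = x`. -/
lemma nonpt_decomp {a : List ℕ} (ha : Mono a) {x : ℕ} (hx : ¬ IsPt a x) :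
    cntP a x ≤ x ∧ cntV a (x - cntP a x) = cntP a x := by
  set i := cntP a x with hi
  have hile : i ≤ a.length := cntP_le_length a x
  have hix : i ≤ x := by
    by_contra hc
    push_neg at hc
    have hxlen : x < a.length := lt_of_lt_of_le hc hile
    have := (lt_cntP_iff (x := x) ha hxlen).mp (by omega)
    exact hx ⟨x, hxlen, by omega⟩
  refine ⟨hix, ?_⟩
  set m := x - i with hm
  -- t < i → a_t ≤ m ; t ≥ i → a_t > m
  have hup : ∀ t, t < i → a.getD t 0 ≤ m := by
    intro t ht
    have htlen : t < a.length := lt_of_lt_of_le ht hile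
    have h1 := (lt_cntP_iff ha htlen).mp ht
    rcases Nat.lt_or_ge t (i-1) with h | h
    · have h2 := ha t (i-1) (by omega) (by omega)
      have h3 := (lt_cntP_iff ha (a := a) (x := x) (t := i-1) (by omega)).mp (by omega)
      have h4 : a.getD (i-1) 0 + (i-1) ≠ x := fun hc => hx ⟨i-1, by omega, hc⟩
      omega
    · have ht' : t = i - 1 := by omega
      have h4 : a.getD t 0 + t ≠ x := fun hc => hx ⟨t, htlen, hc⟩
      omega
  have h1 : i ≤ cntV a m := by
    rcases Nat.eq_zero_or_pos i with h0 | h0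
    · omega
    · have := (lt_cntV_iff ha (m := m) (t := i-1) (by omega)).mpr (hup (i-1) (by omega))
      omega
  have h2 : cntV a m ≤ i := by
    by_contra hc
    push_neg at hc
    have hlen : i < a.length := lt_of_lt_of_le hc (cntV_le_length a m)
    have hgm : a.getD i 0 ≤ m := (lt_cntV_iff (m := m) ha hlen).mp hc
    have h3 : ¬ (i < cntP a x) := by omega
    rw [hi] at h3
    rw [lt_cntP_iff (x := x) ha hlen] at h3
    omega
  omega

/-- the if-condition in Fm is equivalent to being a point -/
lemma fm_cond_iff {a : List ℕ} (ha : Mono a) (x : ℕ) :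
    (0 < cntP a x ∧ a.getD (cntP a x - 1) 0 + (cntP a x - 1) = x) ↔ IsPt a x := by
  constructor
  · rintro ⟨h1, h2⟩
    exact ⟨cntP a x - 1, by have := cntP_le_length a x; omega, h2⟩
  · rintro ⟨j, hj, hjeq⟩
    have := cntP_pt ha hj
    rw [← hjeq, this]
    simp

lemma Fm_pt {a b : List ℕ} (ha : Mono a) {j : ℕ} (hj : j < a.length) :
    Fm a b (a.getD j 0 + j) = b.getD j 0 + j := by
  rw [Fm]
  rw [if_pos ((fm_cond_iff ha _).mpr ⟨j, hj, rfl⟩)]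
  rw [cntP_pt ha hj]
  simp

lemma Fm_nonpt {a b : List ℕ} (ha : Mono a) {x : ℕ} (hx : ¬ IsPt a x) :
    Fm a b x = (x - cntP a x) + cntV b (x - cntP a x) := by
  rw [Fm, if_neg (fun hc => hx ((fm_cond_iff ha x).mp hc))]

/-- the inverse property -/
lemma Fm_inverse {l r : List ℕ} (hl : Mono l) (hr : Mono r) (hlen : l.length = r.length)
    (x : ℕ) : Fm r l (Fm l r x) = x := by
  by_cases hpt : IsPt l x
  · obtain ⟨j, hj, hjeq⟩ := hpt
    rw [← hjeq, Fm_pt hl hj, Fm_pt hr (hlen ▸ hj)]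
  · rw [Fm_nonpt hl hpt]
    obtain ⟨hix, hcv⟩ := nonpt_decomp hl hpt
    set m := x - cntP l x with hm
    have h1 : ¬ IsPt r (m + cntV r m) := enum_not_pt hr m
    rw [Fm_nonpt hr h1, cntP_enum hr m]
    have : m + cntV r m - cntV r m = m := by omega
    rw [this, hcv]
    omega


/-- the size of the permutation associated to the polyomino -/
def N (l r : List ℕ) : ℕ := max 1 (r.getD (r.length - 1) 0 + r.length)

structure Poly (l r : List ℕ) : Prop where
  hlen : l.length = r.length
  hl : Mono l
  hr : Mono r
  hhead : 0 < l.length → l.getD 0 0 = 0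
  hlr : ∀ i, i < l.length → l.getD i 0 < r.getD i 0
  hstep : ∀ i, i + 1 < l.length → l.getD (i+1) 0 < r.getD i 0

lemma cnt_nil {a : List ℕ} (h : a.length = 0) (x : ℕ) : cntP a x = 0 ∧ cntV a x = 0 := by
  constructor <;> [unfold cntP; unfold cntV] <;> rw [h] <;> simp

lemma Fm_nil {a b : List ℕ} (ha : a.length = 0) (hb : b.length = 0) (x : ℕ) :
    Fm a b x = x := by
  obtain ⟨h1, _⟩ := cnt_nil ha x
  rw [Fm, h1]
  obtain ⟨_, h2⟩ := cnt_nil hb x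
  simp [h2]

lemma N_pos (l r : List ℕ) : 0 < N l r := le_max_left 1 _

lemma N_eq {l r : List ℕ} (hs : 0 < r.length) :
    N l r = r.getD (r.length - 1) 0 + r.length := max_eq_right (by omega)

namespace Poly

variable {l r : List ℕ}

lemma cntP_pos (P : Poly l r) {x : ℕ} (hs : 0 < l.length) : 0 < cntP l x := by
  have h0 : l.getD 0 0 + 0 ≤ x := by rw [P.hhead hs]; omega
  exact lt_of_le_of_lt (Nat.zero_le _) ((lt_cntP_iff P.hl hs).mpr h0)

/-- RANGE: Fm stays in range -/
lemma range1 (P : Poly l r) {x : ℕ} (hx : x < N l r) : Fm l r x < N l r := by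
  rcases Nat.eq_zero_or_pos l.length with hs | hs
  · rw [Fm_nil hs (P.hlen ▸ hs) x]; exact hx
  have hrs : 0 < r.length := P.hlen ▸ hs
  rw [N_eq hrs] at hx ⊢
  by_cases hpt : IsPt l x
  · obtain ⟨j, hj, hjeq⟩ := hpt
    rw [← hjeq, Fm_pt P.hl hj]
    have hjr : j < r.length := P.hlen ▸ hj
    have := P.hr j (r.length - 1) (by omega) (by omega)
    omega
  · rw [Fm_nonpt P.hl hpt]
    obtain ⟨hix, _⟩ := nonpt_decomp P.hl hpt
    set i := cntP l x with hi
    set m := x - i with hm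
    have hile : i ≤ l.length := cntP_le_length l x
    have hcle : cntV r m ≤ r.length := cntV_le_length r m
    rcases Nat.lt_or_ge i l.length with hilt | hige
    · -- m < l_i and cntV r m ≤ i
      have hml : m < l.getD i 0 := by
        have h1 : ¬ (i < cntP l x) := by omega
        rw [lt_cntP_iff P.hl hilt] at h1
        omega
      have hc : cntV r m ≤ i := by
        by_contra hc
        push_neg at hc
        have hir : i < r.length := P.hlen ▸ hilt
        have := (lt_cntV_iff (m := m) P.hr hir).mp hc
        have := P.hlr i hilt
        omega
      have h2 := P.hl i (l.length - 1) (by omega) (by omega)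
      have h3 := P.hlr (l.length - 1) (by omega)
      have h4 : l.length = r.length := P.hlen
      omega
    · have hieq : i = l.length := le_antisymm hile hige
      have h4 : l.length = r.length := P.hlen
      omega

/-- points map strictly up (weak excedance, strict) -/
lemma pt_exc (P : Poly l r) {j : ℕ} (hj : j < l.length) :
    l.getD j 0 + j < Fm l r (l.getD j 0 + j) := by
  rw [Fm_pt P.hl hj]
  have := P.hlr j hj
  omega

/-- PREFIXMAX : anything before the j-th point maps below the j-th value -/
lemma prefix_max (P : Poly l r) {j b : ℕ} (hj : j < l.length) (hb : b < l.getD j 0 + j) :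
    Fm l r b < r.getD j 0 + j := by
  by_cases hpt : IsPt l b
  · obtain ⟨t, htl, hteq⟩ := hpt
    have htj : t < j := by
      by_contra hc
      push_neg at hc
      rcases Nat.eq_or_lt_of_le hc with h | h
      · rw [← h] at hteq; omega
      · have := pt_strictMono P.hl h htl
        omega
    rw [← hteq, Fm_pt P.hl htl]
    exact pt_strictMono P.hr htj (P.hlen ▸ hj)
  · rw [Fm_nonpt P.hl hpt]
    obtain ⟨hix, _⟩ := nonpt_decomp P.hl hpt
    set i := cntP l b with hi
    set m := b - i with hm
    have hipos : 0 < i := P.cntP_pos (by omega)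
    have hij : i ≤ j := by
      by_contra hc
      push_neg at hc
      have := (lt_cntP_iff (x := b) P.hl hj).mp (by omega)
      omega
    have hils : i < l.length := by omega
    have hml : m < l.getD i 0 := by
      have h1 : ¬ (i < cntP l b) := by omega
      rw [lt_cntP_iff P.hl hils] at h1
      omega
    have hstep := P.hstep (i-1) (by omega)
    rw [show i - 1 + 1 = i from by omega] at hstep
    have hc : cntV r m ≤ i - 1 := by
      by_contra hc
      push_neg at hc
      have hir : i - 1 < r.length := by have := P.hlen; omega
      have := (lt_cntV_iff (m := m) P.hr hir).mp (by omega)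
      omega
    have h2 := P.hl i j hij hj
    have h3 := P.hlr j hj
    omega

/-- DEFICIENCY: non-points map strictly down -/
lemma nonpt_def (P : Poly l r) {x : ℕ} (hx : x < N l r) (hs : 0 < l.length) (hpt : ¬ IsPt l x) :
    Fm l r x < x := by
  rw [Fm_nonpt P.hl hpt]
  obtain ⟨hix, hcv⟩ := nonpt_decomp P.hl hpt
  set i := cntP l x with hi
  set m := x - i with hm
  have hipos : 0 < i := P.cntP_pos hs
  have hrm : m < r.getD (i-1) 0 := by
    rcases Nat.lt_or_ge i l.length with hilt | hige
    · have hml : m < l.getD i 0 := by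
        have h1 : ¬ (i < cntP l x) := by omega
        rw [lt_cntP_iff P.hl hilt] at h1
        omega
      have hstep := P.hstep (i-1) (by omega)
      rw [show i - 1 + 1 = i from by omega] at hstep
      omega
    · have hieq : i = l.length := le_antisymm (cntP_le_length l x) hige
      rw [N_eq (P.hlen ▸ hs)] at hx
      have hLR : l.length = r.length := P.hlen
      have hridx : i - 1 = r.length - 1 := by omega
      rw [hridx]
      omega
  have hile : i ≤ l.length := by rw [hi]; exact cntP_le_length l x
  have hc : cntV r m ≤ i - 1 := by
    by_contra hc
    push_neg at hc
    have hir : i - 1 < r.length := by have := P.hlen; omega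
    have := (lt_cntV_iff (m := m) P.hr hir).mp (by omega)
    omega
  omega

/-- FILLMONO: Fm is strictly monotone on non-points -/
lemma fill_mono (P : Poly l r) {x x' : ℕ} (hx : ¬ IsPt l x) (hx' : ¬ IsPt l x') (hlt : x < x') :
    Fm l r x < Fm l r x' := by
  rw [Fm_nonpt P.hl hx, Fm_nonpt P.hl hx']
  obtain ⟨h1, h2⟩ := nonpt_decomp P.hl hx
  obtain ⟨h1', h2'⟩ := nonpt_decomp P.hl hx'
  set m := x - cntP l x with hm
  set m' := x' - cntP l x' with hm'
  have hmm : m < m' := by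
    by_contra hc
    push_neg at hc
    have := cntV_mono l hc
    omega
  exact enum_strictMono r hmm

end Poly

/-- the permutation associated to a polyomino -/
noncomputable def PsiPerm (l r : List ℕ) (P : Poly l r) : Equiv.Perm (Fin (N l r)) :=
  Equiv.ofBijective (fun x => ⟨Fm l r x.val, P.range1 x.isLt⟩)
    (Finite.injective_iff_bijective.mp (fun x y h => by
      have h2 := congrArg Fin.val h
      simp only at h2
      have h3 := congrArg (Fm r l) h2
      rw [Fm_inverse P.hl P.hr P.hlen, Fm_inverse P.hl P.hr P.hlen] at h3
      exact Fin.ext h3))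

lemma PsiPerm_apply {l r : List ℕ} (P : Poly l r) (x : Fin (N l r)) :
    (PsiPerm l r P x : ℕ) = Fm l r x.val := rfl

lemma PsiPerm_indec {l r : List ℕ} (P : Poly l r) : Indecomposable (PsiPerm l r P) := by
  refine ⟨N_pos l r, ?_⟩
  rintro ⟨j, hj0, hjN, hdec⟩
  rcases Nat.eq_zero_or_pos l.length with hs | hs
  · have hr0 : r.length = 0 := P.hlen ▸ hs
    have hrnil : r = [] := List.length_eq_zero_iff.mp hr0
    have : N l r = 1 := by rw [hrnil]; simp [N]
    omega
  · -- let t be the largest point index with l_t + t ≤ j - 1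
    have hrs : 0 < r.length := P.hlen ▸ hs
    set t := cntP l (j-1) - 1 with ht
    have htpos : 0 < cntP l (j-1) := P.cntP_pos hs
    have htlen : t < l.length := by
      have := cntP_le_length l (j-1)
      omega
    have hptle : l.getD t 0 + t ≤ j - 1 := (lt_cntP_iff P.hl htlen).mp (by omega)
    have hvt : j ≤ r.getD t 0 + t := by
      rcases Nat.lt_or_ge (t+1) l.length with hlt | hge
      · have hnext : ¬ (t + 1 < cntP l (j-1)) := by omega
        rw [lt_cntP_iff P.hl hlt] at hnext
        have := P.hstep t hlt
        omega
      · have hteq : t = l.length - 1 := by omega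
        rw [N_eq hrs] at hjN
        have hLR : l.length = r.length := P.hlen
        have : r.getD t 0 = r.getD (r.length - 1) 0 := by rw [show t = r.length - 1 from by omega]
        omega
    set i : Fin (N l r) := ⟨l.getD t 0 + t, by rw [N_eq hrs]; have := P.hlr t htlen; have := P.hr t (r.length -1) (by have := P.hlen; omega) (by omega); have := P.hlen; omega⟩ with hidef
    have hlti : (i : ℕ) < j := by
      simp only [hidef]
      omega
    have := hdec i hlti
    rw [PsiPerm_apply] at this
    simp only [hidef] at this
    rw [Fm_pt P.hl htlen] at this
    omega

lemma PsiPerm_avoids {l r : List ℕ} (P : Poly l r) : Avoids321 (PsiPerm l r P) := by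
  rintro ⟨i, j, k, hij, hjk, h1, h2⟩
  rw [Fin.lt_def] at hij hjk h1 h2
  rw [PsiPerm_apply, PsiPerm_apply] at h1 h2
  have hjnpt : ¬ IsPt l (j : ℕ) := by
    intro hpt
    obtain ⟨t, htl, hteq⟩ := hpt
    have := P.prefix_max htl (hteq ▸ hij)
    rw [← hteq, Fm_pt P.hl htl] at h2
    omega
  have hknpt : ¬ IsPt l (k : ℕ) := by
    intro hpt
    obtain ⟨t, htl, hteq⟩ := hpt
    have := P.prefix_max htl (hteq ▸ hjk)
    rw [← hteq, Fm_pt P.hl htl] at h1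
    omega
  have := P.fill_mono hjnpt hknpt hjk
  omega


/-! ### Part 3: from permutations to polyominoes -/

section PermFacts

variable {n : ℕ} (π : Equiv.Perm (Fin n))

lemma card_val_lt {v : ℕ} (hv : v ≤ n) :
    (Finset.univ.filter fun z : Fin n => (z : ℕ) < v).card = v := by
  have h : (Finset.univ.filter fun z : Fin n => (z : ℕ) < v)
      = (Finset.range v).attachFin (fun m hm => lt_of_lt_of_le (Finset.mem_range.mp hm) hv) := by
    ext z
    rw [Finset.mem_filter, Finset.mem_attachFin, Finset.mem_range]
    simp
  rw [h, Finset.card_attachFin, Finset.card_range]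

lemma card_pi_lt {v : ℕ} (hv : v ≤ n) :
    (Finset.univ.filter fun z : Fin n => ((π z : Fin n) : ℕ) < v).card = v := by
  refine Eq.trans ?_ (card_val_lt (n := n) hv)
  apply Finset.card_bij' (fun z _ => π z) (fun w _ => π.symm w)
  · intro a ha
    rw [Finset.mem_filter] at *
    exact ⟨Finset.mem_univ _, ha.2⟩
  · intro b hb
    rw [Finset.mem_filter] at *
    refine ⟨Finset.mem_univ _, ?_⟩
    have : π (π.symm b) = b := π.apply_symm_apply b
    rw [this]
    exact hb.2
  · intro a _
    exact π.symm_apply_apply a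
  · intro b _
    exact π.apply_symm_apply b

/-- weak excedances (= left-to-right maxima) of a 321-avoiding permutation increase -/
lemma exc_mono (hA : Avoids321 π) {x y : Fin n} (hxy : x < y)
    (hx : (x : ℕ) ≤ π x) (hy : (y : ℕ) ≤ π y) : ((π x : Fin n) : ℕ) < π y := by
  by_contra hc
  push_neg at hc
  have hne : (π y : Fin n) ≠ π x := fun h => absurd (π.injective h) (by
    intro h2
    rw [h2] at hxy
    exact lt_irrefl _ hxy)
  have hlt : ((π y : Fin n) : ℕ) < (π x : Fin n) := by
    rcases Nat.lt_or_ge ((π y : Fin n) : ℕ) ((π x : Fin n) : ℕ) with h | h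
    · exact h
    · exact absurd (Fin.ext (le_antisymm hc h)) hne
  -- find z > y with π z < π y
  set A := Finset.univ.filter fun z : Fin n => ((π z : Fin n) : ℕ) < (π y : Fin n) with hA'
  have hcardA : A.card = (π y : Fin n) := card_pi_lt π (Nat.le_of_lt (π y).isLt)
  have hsplit := Finset.card_filter_add_card_filter_not
    (s := A) (p := fun z => z ≤ y)
  have hsub : A.filter (fun z => z ≤ y) ⊆ (Finset.univ.filter fun z : Fin n => (z : ℕ) < (y : ℕ)).erase x := by
    intro z hz
    rw [Finset.mem_filter] at hz
    obtain ⟨hzA, hzy⟩ := hz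
    rw [hA', Finset.mem_filter] at hzA
    rw [Finset.mem_erase, Finset.mem_filter]
    have hzney : z ≠ y := fun h => by rw [h] at hzA; omega
    refine ⟨fun h => ?_, Finset.mem_univ _, ?_⟩
    · rw [h] at hzA
      omega
    · rcases lt_or_eq_of_le hzy with h | h
      · exact h
      · exact absurd h hzney
  have hxmem : x ∈ Finset.univ.filter fun z : Fin n => (z : ℕ) < (y : ℕ) := by
    rw [Finset.mem_filter]
    exact ⟨Finset.mem_univ _, hxy⟩
  have hcount : (A.filter (fun z => z ≤ y)).card ≤ (y : ℕ) - 1 := by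
    have h1 := Finset.card_le_card hsub
    rw [Finset.card_erase_of_mem hxmem, card_val_lt (Nat.le_of_lt y.isLt)] at h1
    exact h1
  have hy' : (y : ℕ) ≤ (π y : Fin n) := hy
  have hpos : 0 < (A.filter (fun z => ¬ z ≤ y)).card := by
    have hy0 : 0 < (y : ℕ) := by
      rcases Nat.eq_zero_or_pos (y : ℕ) with h | h
      · have : (x : ℕ) < (y : ℕ) := hxy
        omega
      · exact h
    omega
  obtain ⟨z, hz⟩ := Finset.card_pos.mp hpos
  rw [Finset.mem_filter] at hz
  obtain ⟨hzA, hzgt⟩ := hz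
  rw [hA', Finset.mem_filter] at hzA
  push_neg at hzgt
  exact hA ⟨x, y, z, hxy, hzgt, by omega, by omega⟩

/-- a strict deficiency has a bigger earlier value -/
lemma def_has_bigger (hy : ((π y : Fin n) : ℕ) < (y : Fin n)) :
    ∃ x : Fin n, x < y ∧ ((π y : Fin n) : ℕ) < π x := by
  by_contra hc
  push_neg at hc
  have hsub : (Finset.univ.filter fun z : Fin n => (z : ℕ) < (y : ℕ)) ⊆
      Finset.univ.filter fun z : Fin n => ((π z : Fin n) : ℕ) < (π y : Fin n) := by
    intro z hz
    rw [Finset.mem_filter] at *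
    refine ⟨Finset.mem_univ _, ?_⟩
    have h1 := hc z hz.2
    have hne : π z ≠ π y := fun h => by
      have := π.injective h
      rw [this] at hz
      omega
    have : ((π z : Fin n) : ℕ) ≠ (π y : Fin n) := fun h => hne (Fin.ext h)
    omega
  have h1 := Finset.card_le_card hsub
  rw [card_val_lt (Nat.le_of_lt y.isLt), card_pi_lt π (Nat.le_of_lt (π y).isLt)] at h1
  omega

/-- non-excedance values increase (321-avoiding) -/
lemma fills_mono (hA : Avoids321 π) {x y : Fin n} (hxy : x < y)
    (hx : ((π x : Fin n) : ℕ) < (x : ℕ)) (hy : ((π y : Fin n) : ℕ) < (y : ℕ)) :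
    ((π x : Fin n) : ℕ) < π y := by
  by_contra hc
  push_neg at hc
  have hne : ((π y : Fin n) : ℕ) ≠ (π x : Fin n) := fun h => by
    have := π.injective (Fin.ext h : π y = π x)
    rw [this] at hxy
    exact lt_irrefl _ hxy
  obtain ⟨w, hwx, hw⟩ := def_has_bigger π hx
  exact hA ⟨w, x, y, hwx, hxy, by omega, hw⟩

/-- anything before a weak excedance maps strictly below its value -/
lemma before_exc (hA : Avoids321 π) {x y : Fin n} (hxy : x < y) (hy : (y : ℕ) ≤ π y) :
    ((π x : Fin n) : ℕ) < π y := by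
  rcases Nat.lt_or_ge ((π x : Fin n) : ℕ) (x : ℕ) with h | h
  · have : (x : ℕ) < (y : ℕ) := hxy
    omega
  · exact exc_mono π hA hxy h hy

end PermFacts


/-! ### Phi : permutation → polyomino -/

lemma getD_ofFn {m : ℕ} (f : Fin m → ℕ) {j : ℕ} (hj : j < m) :
    (List.ofFn f).getD j 0 = f ⟨j, hj⟩ := by
  rw [List.getD_eq_getElem _ _ (by rw [List.length_ofFn]; exact hj)]
  simp

lemma headI_eq_getD {l : List ℕ} (h : l ≠ []) : l.headI = l.getD 0 0 := by
  cases l with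
  | nil => exact absurd rfl h
  | cons a t => rfl

lemma fin_strictMono_le {m : ℕ} {f : Fin m → ℕ} (hf : ∀ i j : Fin m, i < j → f i < f j) :
    ∀ j : Fin m, (j : ℕ) ≤ f j := by
  have key : ∀ v : ℕ, ∀ j : Fin m, (j : ℕ) = v → v ≤ f j := by
    intro v
    induction v with
    | zero => intro j _; omega
    | succ w ih =>
      intro j hj
      have hw : w < m := by omega
      have h1 := ih ⟨w, hw⟩ rfl
      have h2 := hf ⟨w, hw⟩ j (by simp [Fin.lt_def]; omega)
      omega
  exact fun j => key (j : ℕ) j rfl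

lemma fin_strictMono_diff {m : ℕ} {f : Fin m → ℕ} (hf : ∀ i j : Fin m, i < j → f i < f j) :
    ∀ d : ℕ, ∀ i j : Fin m, (j : ℕ) = (i : ℕ) + d → f i + d ≤ f j := by
  intro d
  induction d with
  | zero =>
    intro i j hij
    have : i = j := Fin.ext (by omega)
    rw [this]
    omega
  | succ w ih =>
    intro i j hij
    have hw : (i : ℕ) + w < m := by have := j.isLt; omega
    have h1 := ih i ⟨(i : ℕ) + w, hw⟩ rfl
    have h2 := hf ⟨(i : ℕ) + w, hw⟩ j (by simp [Fin.lt_def]; omega)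
    omega

def ExcList {n : ℕ} (π : Equiv.Perm (Fin n)) : List (Fin n) :=
  (List.finRange n).filter fun x => decide ((x : ℕ) ≤ ((π x : Fin n) : ℕ))

def Phi : (Σ n : ℕ, Equiv.Perm (Fin n)) → List ℕ × List ℕ := fun p =>
  if p.1 ≤ 1 then ([], [])
  else
    (List.ofFn (fun j : Fin (ExcList p.2).length => (((ExcList p.2).get j) : ℕ) - (j : ℕ)),
     List.ofFn (fun j : Fin (ExcList p.2).length => ((p.2 ((ExcList p.2).get j) : Fin p.1) : ℕ) - (j : ℕ)))

section ExcFacts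

variable {n : ℕ} {π : Equiv.Perm (Fin n)}

lemma mem_ExcList {x : Fin n} : x ∈ ExcList π ↔ (x : ℕ) ≤ π x := by
  rw [ExcList, List.mem_filter]
  simp [List.mem_finRange]

lemma ExcList_pairwise : (ExcList π).Pairwise (· < ·) :=
  List.Pairwise.filter _ (List.pairwise_lt_finRange n)

/-- positions of excedances, as naturals -/
def pE (π : Equiv.Perm (Fin n)) (j : Fin (ExcList π).length) : ℕ := ((ExcList π).get j : ℕ)

/-- values of excedances, as naturals -/
def vE (π : Equiv.Perm (Fin n)) (j : Fin (ExcList π).length) : ℕ := ((π ((ExcList π).get j) : Fin n) : ℕ)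

lemma pE_strict {i j : Fin (ExcList π).length} (hij : i < j) : pE π i < pE π j := by
  have := List.pairwise_iff_get.mp (ExcList_pairwise (π := π)) i j hij
  exact this

lemma pE_lt_n (j : Fin (ExcList π).length) : pE π j < n := ((ExcList π).get j).isLt

lemma pE_ge (j : Fin (ExcList π).length) : (j : ℕ) ≤ pE π j :=
  fin_strictMono_le (fun a b h => pE_strict (i := a) (j := b) h) j

lemma pE_le_vE (j : Fin (ExcList π).length) : pE π j ≤ vE π j :=
  mem_ExcList.mp (List.get_mem _ j)

lemma vE_strict (hA : Avoids321 π) {i j : Fin (ExcList π).length} (hij : i < j) :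
    vE π i < vE π j := by
  apply exc_mono π hA _ (pE_le_vE i) (pE_le_vE j)
  rw [Fin.lt_def]
  exact pE_strict hij

lemma vE_lt_n (j : Fin (ExcList π).length) : vE π j < n := (π ((ExcList π).get j)).isLt

lemma vE_ge (hA : Avoids321 π) (j : Fin (ExcList π).length) : (j : ℕ) ≤ vE π j :=
  le_trans (pE_ge j) (pE_le_vE j)

lemma ExcList_length_pos (hn : 0 < n) : 0 < (ExcList π).length := by
  have : (⟨0, hn⟩ : Fin n) ∈ ExcList π := mem_ExcList.mpr (Nat.zero_le _)
  exact List.length_pos_iff.mpr (List.ne_nil_of_mem this)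

lemma pE_zero (hn : 0 < n) (h0 : (0 : ℕ) < (ExcList π).length) :
    pE π ⟨0, h0⟩ = 0 := by
  have hmem : (⟨0, hn⟩ : Fin n) ∈ ExcList π := mem_ExcList.mpr (Nat.zero_le _)
  obtain ⟨t, ht⟩ := List.mem_iff_get.mp hmem
  have h2 : pE π t = 0 := by unfold pE; rw [ht]
  rcases Nat.eq_zero_or_pos (t : ℕ) with h | h
  · have h3 : (⟨0, h0⟩ : Fin (ExcList π).length) = t := Fin.ext (by simp; omega)
    rw [h3]
    exact h2
  · have h3 := pE_strict (π := π) (i := ⟨0, h0⟩) (j := t) (by simp [Fin.lt_def]; omega)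
    omega

/-- excedances are strict for indecomposable permutations of size ≥ 2 -/
lemma strict_exc (hI : Indecomposable π) (hA : Avoids321 π) (hn : 2 ≤ n)
    {x : Fin n} (hx : (x : ℕ) ≤ π x) : (x : ℕ) < π x := by
  rcases Nat.eq_or_lt_of_le hx with heq | h
  · exfalso
    apply hI.2
    rcases Nat.eq_zero_or_pos (x : ℕ) with h0 | h0
    · refine ⟨1, Nat.one_pos, by omega, fun i hi => ?_⟩
      have : i = x := Fin.ext (by omega)
      rw [this]
      omega
    · refine ⟨(x : ℕ), h0, x.isLt, fun i hi => ?_⟩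
      rcases Nat.lt_or_ge ((π i : Fin n) : ℕ) (i : ℕ) with hd | hd
      · omega
      · have := exc_mono π hA (show i < x by rw [Fin.lt_def]; exact hi) hd hx
        omega
  · exact h

lemma step_exc (hI : Indecomposable π) (hA : Avoids321 π)
    {j : Fin (ExcList π).length} {j' : Fin (ExcList π).length}
    (hjj' : (j' : ℕ) = (j : ℕ) + 1) : pE π j' ≤ vE π j := by
  by_contra hc
  push_neg at hc
  apply hI.2
  refine ⟨vE π j + 1, by omega, ?_, fun i hi => ?_⟩
  · have h1 := vE_strict hA (show j < j' by rw [Fin.lt_def]; omega)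
    have h2 := vE_lt_n (π := π) j'
    omega
  · rcases Nat.lt_or_ge ((π i : Fin n) : ℕ) (i : ℕ) with hd | hd
    · omega
    · have himem : i ∈ ExcList π := mem_ExcList.mpr hd
      obtain ⟨t, ht⟩ := List.mem_iff_get.mp himem
      have hpt : pE π t = (i : ℕ) := by rw [pE, ht]
      have htj : t ≤ j := by
        by_contra hcc
        push_neg at hcc
        have : j' ≤ t := by rw [Fin.le_def]; omega
        rcases Nat.eq_or_lt_of_le this with he | hl
        · have : j' = t := Fin.ext he
          rw [← this] at hpt
          omega
        · have := pE_strict (π := π) (i := j') (j := t) (by rw [Fin.lt_def]; exact hl)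
          omega
      have hvt : vE π t ≤ vE π j := by
        rcases Nat.eq_or_lt_of_le htj with he | hl
        · rw [Fin.ext he]
        · exact le_of_lt (vE_strict hA hl)
      have : ((π i : Fin n) : ℕ) = vE π t := by rw [vE, ht]
      omega

lemma vE_last (hn : 0 < n) (hA : Avoids321 π) {t0 : Fin (ExcList π).length}
    (hlast : (t0 : ℕ) = (ExcList π).length - 1) : vE π t0 = n - 1 := by
  set z := π.symm ⟨n - 1, by omega⟩ with hz
  have hpz : ((π z : Fin n) : ℕ) = n - 1 := by rw [hz, π.apply_symm_apply]
  have hzmem : z ∈ ExcList π := mem_ExcList.mpr (by have := z.isLt; omega)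
  obtain ⟨t, ht⟩ := List.mem_iff_get.mp hzmem
  have hvt : vE π t = n - 1 := by rw [vE, ht, hpz]
  have htle : t ≤ t0 := by
    rw [Fin.le_def]
    have := t.isLt
    omega
  rcases Nat.eq_or_lt_of_le htle with he | hl
  · rw [← Fin.ext he, hvt]
  · have h1 := vE_strict hA hl
    have h2 := vE_lt_n (π := π) t0
    omega

lemma invTable_nonexc (hA : Avoids321 π) {x : Fin n} (hx : ((π x : Fin n) : ℕ) < x) :
    invTable π x = 0 := by
  rw [invTable, Finset.card_eq_zero, Finset.filter_eq_empty_iff]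
  rintro b _
  rintro ⟨hxb, hpb⟩
  rw [Fin.lt_def] at hxb hpb
  rcases Nat.lt_or_ge ((π b : Fin n) : ℕ) (b : ℕ) with hd | hd
  · have := fills_mono π hA (show x < b by rw [Fin.lt_def]; exact hxb) hx hd
    omega
  · omega

lemma invTable_exc (hA : Avoids321 π) {x : Fin n} (hx : (x : ℕ) ≤ π x) :
    invTable π x = ((π x : Fin n) : ℕ) - x := by
  set A := Finset.univ.filter fun b : Fin n => ((π b : Fin n) : ℕ) < ((π x : Fin n) : ℕ) with hA'
  have hcardA : A.card = ((π x : Fin n) : ℕ) := card_pi_lt π (Nat.le_of_lt (π x).isLt)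
  have hsplit := Finset.card_filter_add_card_filter_not (s := A) (p := fun b => x < b)
  have h1 : A.filter (fun b => x < b) = Finset.univ.filter fun b : Fin n => x < b ∧ π b < π x := by
    rw [hA', Finset.filter_filter]
    apply Finset.filter_congr
    intro b _
    constructor
    · rintro ⟨h1, h2⟩; exact ⟨h2, h1⟩
    · rintro ⟨h1, h2⟩; exact ⟨h2, h1⟩
  have h2 : A.filter (fun b => ¬ x < b) = Finset.univ.filter fun b : Fin n => (b : ℕ) < x := by
    rw [hA', Finset.filter_filter]
    apply Finset.filter_congr
    intro b _
    constructor
    · rintro ⟨h1, h2⟩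
      rw [not_lt, Fin.le_def] at h2
      have hne : b ≠ x := fun hc => by rw [hc] at h1; omega
      have : (b : ℕ) ≠ (x : ℕ) := fun hc => hne (Fin.ext hc)
      omega
    · intro hb
      refine ⟨before_exc π hA (show b < x by rw [Fin.lt_def]; exact hb) hx, ?_⟩
      rw [not_lt, Fin.le_def]
      omega
  rw [h1, h2] at hsplit
  rw [card_val_lt (Nat.le_of_lt x.isLt)] at hsplit
  rw [invTable]
  have hx' : (x : ℕ) ≤ ((π x : Fin n) : ℕ) := hx
  omega

lemma inversions_eq_sum : inversions π = ∑ x : Fin n, invTable π x := by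
  rw [inversions]
  rw [Finset.card_eq_sum_card_fiberwise (f := Prod.fst) (t := Finset.univ)
    (fun x _ => Finset.mem_univ _)]
  apply Finset.sum_congr rfl
  intro x _
  rw [invTable]
  apply Finset.card_bij (fun p _ => p.2)
  · rintro ⟨a, b⟩ hab
    rw [Finset.mem_filter] at *
    simp at hab ⊢
    obtain ⟨⟨h1, h2⟩, h3⟩ := hab
    subst h3
    exact ⟨h1, h2⟩
  · rintro ⟨a, b⟩ hab ⟨c, d⟩ hcd h
    rw [Finset.mem_filter] at *
    simp at hab hcd h
    obtain ⟨_, h3⟩ := hab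
    obtain ⟨_, h4⟩ := hcd
    subst h3; subst h4; subst h
    rfl
  · intro b hb
    rw [Finset.mem_filter] at hb
    refine ⟨(x, b), ?_, rfl⟩
    rw [Finset.mem_filter]
    simp
    exact hb.2

end ExcFacts


lemma inversions_small {n : ℕ} (π : Equiv.Perm (Fin n)) (hn : n ≤ 1) : inversions π = 0 := by
  rw [inversions, Finset.card_eq_zero, Finset.filter_eq_empty_iff]
  rintro ⟨a, b⟩ _ ⟨h1, _⟩
  rw [Fin.lt_def] at h1
  have := a.isLt
  have := b.isLt
  omega

lemma Phi_eq {n : ℕ} (π : Equiv.Perm (Fin n)) (hn : 1 < n) :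
    Phi ⟨n, π⟩ = (List.ofFn (fun j : Fin (ExcList π).length => pE π j - (j : ℕ)),
                  List.ofFn (fun j : Fin (ExcList π).length => vE π j - (j : ℕ))) := by
  simp only [Phi]
  rw [if_neg (by omega)]
  rfl

lemma sorted_ofFn {m : ℕ} {f : Fin m → ℕ} (h : ∀ i j : Fin m, i < j → f i ≤ f j) :
    (List.ofFn f).Pairwise (· ≤ ·) := by
  rw [List.pairwise_iff_get]
  intro i j hij
  rw [List.get_ofFn, List.get_ofFn]
  apply h
  rw [Fin.lt_def, Fin.coe_cast, Fin.coe_cast]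
  exact hij

lemma phi_isP {n : ℕ} {π : Equiv.Perm (Fin n)} (hI : Indecomposable π) (hA : Avoids321 π) :
    IsPPolyomino (inversions π) (Phi ⟨n, π⟩).1 (Phi ⟨n, π⟩).2 := by
  rcases le_or_gt n 1 with hn | hn
  · have h0 : Phi ⟨n, π⟩ = ([], []) := by simp only [Phi]; rw [if_pos hn]
    rw [h0]
    dsimp only
    refine ⟨rfl, List.Pairwise.nil, List.Pairwise.nil, fun h => absurd rfl h, ?_, ?_, ?_⟩
    · intro i hi; simp at hi
    · intro i hi; simp at hi
    · rw [inversions_small π hn, List.length_nil, Finset.sum_range_zero]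
  · rw [Phi_eq π hn]
    dsimp only
    set s := (ExcList π).length with hs
    have hs0 : 0 < s := ExcList_length_pos (by omega)
    have hlen1 : (List.ofFn (fun j : Fin s => pE π j - (j : ℕ))).length = s := List.length_ofFn
    have hlen2 : (List.ofFn (fun j : Fin s => vE π j - (j : ℕ))).length = s := List.length_ofFn
    refine ⟨by rw [hlen1, hlen2], ?_, ?_, ?_, ?_, ?_, ?_⟩
    · apply sorted_ofFn
      intro i j hij
      have h1 := fin_strictMono_diff (f := fun j : Fin s => pE π j)
        (fun a b h => pE_strict (i := a) (j := b) h) ((j : ℕ) - (i : ℕ)) i j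
        (by rw [Fin.lt_def] at hij; omega)
      have h2 := pE_ge (π := π) i
      rw [Fin.lt_def] at hij
      simp at h1 ⊢
      omega
    · apply sorted_ofFn
      intro i j hij
      have h1 := fin_strictMono_diff (f := fun j : Fin s => vE π j)
        (fun a b h => vE_strict hA (i := a) (j := b) h) ((j : ℕ) - (i : ℕ)) i j
        (by rw [Fin.lt_def] at hij; omega)
      have h2 := vE_ge hA (π := π) i
      rw [Fin.lt_def] at hij
      simp at h1 ⊢
      omega
    · intro hne
      rw [headI_eq_getD hne, getD_ofFn _ hs0]
      rw [pE_zero (by omega) hs0]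
      simp
    · intro i hi
      rw [hlen1] at hi
      rw [getD_ofFn _ hi, getD_ofFn _ hi]
      have h1 : pE π ⟨i, hi⟩ < vE π ⟨i, hi⟩ := strict_exc hI hA (by omega) (pE_le_vE _)
      have h2 := pE_ge (π := π) ⟨i, hi⟩
      simp at h2 ⊢
      omega
    · intro i hi
      rw [hlen1] at hi
      rw [getD_ofFn _ hi, getD_ofFn _ (by omega : i < s)]
      have h1 : pE π ⟨i + 1, hi⟩ ≤ vE π ⟨i, by omega⟩ :=
        step_exc hI hA (j := ⟨i, by omega⟩) (j' := ⟨i + 1, hi⟩) (by simp)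
      have h2 := pE_ge (π := π) ⟨i + 1, hi⟩
      simp at h2 ⊢
      omega
    · -- the sum of column heights is the number of inversions
      rw [hlen1]
      have hsum : ∑ x ∈ Finset.univ.filter (fun x : Fin n => (x : ℕ) ≤ π x), invTable π x
          = ∑ i ∈ Finset.range s,
            ((List.ofFn (fun j : Fin s => vE π j - (j : ℕ))).getD i 0
              - (List.ofFn (fun j : Fin s => pE π j - (j : ℕ))).getD i 0) := by
        symm
        apply Finset.sum_bij (i := fun j hj => (ExcList π).get ⟨j, Finset.mem_range.mp hj⟩)
        · intro a ha
          rw [Finset.mem_filter]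
          exact ⟨Finset.mem_univ _, mem_ExcList.mp (List.get_mem _ _)⟩
        · intro a ha b hb hab
          have : pE π ⟨a, Finset.mem_range.mp ha⟩ = pE π ⟨b, Finset.mem_range.mp hb⟩ := by
            unfold pE; rw [hab]
          by_contra hne
          rcases Nat.lt_or_ge a b with h | h
          · have := pE_strict (π := π) (i := ⟨a, Finset.mem_range.mp ha⟩)
              (j := ⟨b, Finset.mem_range.mp hb⟩) (by simp [Fin.lt_def]; omega)
            omega
          · have hba : b < a := by
              rcases Nat.eq_or_lt_of_le h with he | hl
              · exact absurd (by omega : a = b) (fun hc => hne (by rw [hc]))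
              · exact hl
            have := pE_strict (π := π) (i := ⟨b, Finset.mem_range.mp hb⟩)
              (j := ⟨a, Finset.mem_range.mp ha⟩) (by simp [Fin.lt_def]; omega)
            omega
        · intro x hx
          rw [Finset.mem_filter] at hx
          obtain ⟨t, ht⟩ := List.mem_iff_get.mp (mem_ExcList.mpr hx.2)
          exact ⟨(t : ℕ), Finset.mem_range.mpr t.isLt, by rw [← ht]⟩
        · intro a ha
          have hia := Finset.mem_range.mp ha
          rw [getD_ofFn _ hia, getD_ofFn _ hia]
          have h1 : invTable π ((ExcList π).get ⟨a, hia⟩) = vE π ⟨a, hia⟩ - pE π ⟨a, hia⟩ :=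
            invTable_exc hA (pE_le_vE _)
          have h2 := pE_ge (π := π) ⟨a, hia⟩
          have h3 := pE_le_vE (π := π) ⟨a, hia⟩
          rw [h1]
          simp at h2 ⊢
          omega
      rw [inversions_eq_sum,
        ← Finset.sum_filter_add_sum_filter_not Finset.univ (fun x : Fin n => (x : ℕ) ≤ π x)
          (invTable π)]
      have hz : ∑ x ∈ Finset.univ.filter (fun x : Fin n => ¬ (x : ℕ) ≤ π x), invTable π x = 0 := by
        apply Finset.sum_eq_zero
        intro x hx
        rw [Finset.mem_filter] at hx
        exact invTable_nonexc hA (by omega)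
      rw [hz, add_zero, hsum]


/-! ### reconstruction -/

lemma enum_unique {M : ℕ} {f g : Fin M → ℕ} (hf : StrictMono f) (hg : StrictMono g)
    {Y : Finset ℕ} (hY : Y.card = M) (hfY : ∀ m, f m ∈ Y) (hgY : ∀ m, g m ∈ Y) :
    ∀ m, f m = g m := by
  have h1 := Finset.orderEmbOfFin_unique hY hfY hf
  have h2 := Finset.orderEmbOfFin_unique hY hgY hg
  intro m
  rw [h1, h2]

lemma mono_of_sorted {l : List ℕ} (h : l.Pairwise (· ≤ ·)) : Mono l := by
  intro i j hij hj
  rcases Nat.eq_or_lt_of_le hij with he | hl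
  · rw [he]
  · have := List.pairwise_iff_get.mp h ⟨i, by omega⟩ ⟨j, hj⟩ (by rw [Fin.lt_def]; exact hl)
    rw [List.getD_eq_getElem _ _ (by omega), List.getD_eq_getElem _ _ hj]
    exact this

lemma poly_of_isP {k : ℕ} {l r : List ℕ} (h : IsPPolyomino k l r) : Poly l r := by
  obtain ⟨h1, h2, h3, h4, h5, h6, _⟩ := h
  refine ⟨h1, mono_of_sorted h2, mono_of_sorted h3, ?_, h5, h6⟩
  intro hp
  have hne : l ≠ [] := List.ne_nil_of_length_pos hp
  rw [← headI_eq_getD hne]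
  exact h4 hne

section Reconstruct

variable {n : ℕ} {π : Equiv.Perm (Fin n)}

/-- the key reconstruction: `Fm` of the `Phi` data recovers `π` -/
lemma psi_phi (hI : Indecomposable π) (hA : Avoids321 π) (hn : 1 < n) (x : Fin n) :
    Fm (Phi ⟨n, π⟩).1 (Phi ⟨n, π⟩).2 (x : ℕ) = π x := by
  rw [Phi_eq π hn]
  dsimp only
  set s := (ExcList π).length with hs
  have hs0 : 0 < s := ExcList_length_pos (by omega)
  set l : List ℕ := List.ofFn (fun j : Fin s => pE π j - (j : ℕ)) with hldef
  set r : List ℕ := List.ofFn (fun j : Fin s => vE π j - (j : ℕ)) with hrdef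
  have hP : Poly l r := by
    apply poly_of_isP (k := inversions π)
    have hh := phi_isP hI hA
    rw [Phi_eq π hn] at hh
    exact hh
  have hlen1 : l.length = s := List.length_ofFn
  have hlen2 : r.length = s := List.length_ofFn
  have hlpt : ∀ j (hj : j < s), l.getD j 0 + j = pE π ⟨j, hj⟩ := by
    intro j hj
    rw [hldef, getD_ofFn _ hj]
    have := pE_ge (π := π) ⟨j, hj⟩
    simp at this ⊢
    omega
  have hrpt : ∀ j (hj : j < s), r.getD j 0 + j = vE π ⟨j, hj⟩ := by
    intro j hj
    rw [hrdef, getD_ofFn _ hj]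
    have := vE_ge hA (π := π) ⟨j, hj⟩
    simp at this ⊢
    omega
  have hpt_iff : ∀ y : Fin n, IsPt l (y : ℕ) ↔ (y : ℕ) ≤ π y := by
    intro y
    constructor
    · rintro ⟨j, hj, hjeq⟩
      rw [hlen1] at hj
      rw [hlpt j hj] at hjeq
      have hyget : (ExcList π).get ⟨j, hj⟩ = y := Fin.ext hjeq
      rw [← hyget]
      exact pE_le_vE _
    · intro hy
      obtain ⟨t, ht⟩ := List.mem_iff_get.mp (mem_ExcList.mpr hy)
      refine ⟨(t : ℕ), by rw [hlen1]; exact t.isLt, ?_⟩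
      rw [hlpt _ t.isLt]
      unfold pE
      rw [show (⟨(t : ℕ), t.isLt⟩ : Fin s) = t from Fin.ext rfl, ht]
  rcases Nat.lt_or_ge ((π x : Fin n) : ℕ) (x : ℕ) with hnonexc | hexc
  · -- non-excedance: via enumeration uniqueness
    have hnpt : ¬ IsPt l (x : ℕ) := fun hc => by have := (hpt_iff x).mp hc; omega
    set M := n - s with hM
    -- the complement finset
    set Y : Finset ℕ := Finset.range n \ (Finset.range s).image (fun j => r.getD j 0 + j) with hY
    have himsub : (Finset.range s).image (fun j => r.getD j 0 + j) ⊆ Finset.range n := by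
      intro y hy
      rw [Finset.mem_image] at hy
      obtain ⟨j, hj, hjeq⟩ := hy
      rw [Finset.mem_range] at hj ⊢
      rw [hrpt j hj] at hjeq
      rw [← hjeq]
      exact vE_lt_n _
    have hYcard : Y.card = M := by
      rw [hY, Finset.card_sdiff_of_subset himsub, Finset.card_range,
        Finset.card_image_of_injOn, Finset.card_range]
      intro a ha b hb hab
      simp only [Finset.coe_range, Set.mem_Iio] at ha hb
      dsimp only at hab
      by_contra hne
      rcases Nat.lt_or_ge a b with h | h
      · have := pt_strictMono hP.hr (i := a) (j := b) h (by omega)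
        omega
      · have : b < a := by omega
        have := pt_strictMono hP.hr (i := b) (j := a) this (by omega)
        omega
    have hmemY : ∀ y : ℕ, y ∈ Y ↔ (y < n ∧ ¬ IsPt r y) := by
      intro y
      rw [hY, Finset.mem_sdiff, Finset.mem_range, Finset.mem_image]
      constructor
      · rintro ⟨h1, h2⟩
        refine ⟨h1, fun hc => h2 ?_⟩
        obtain ⟨j, hj, hjeq⟩ := hc
        rw [hlen2] at hj
        exact ⟨j, Finset.mem_range.mpr hj, hjeq⟩
      · rintro ⟨h1, h2⟩
        refine ⟨h1, fun hc => h2 ?_⟩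
        obtain ⟨j, hj, hjeq⟩ := hc
        rw [Finset.mem_range] at hj
        exact ⟨j, by rw [hlen2]; exact hj, hjeq⟩
    -- the position enumeration
    have hposlt : ∀ m : ℕ, m < M → m + cntV l m < n := by
      intro m hm
      have := cntV_le_length l m
      rw [hlen1] at this
      omega
    have hposnonexc : ∀ m : ℕ, (h : m < M) →
        ((π ⟨m + cntV l m, hposlt m h⟩ : Fin n) : ℕ) < m + cntV l m := by
      intro m hm
      have hnp : ¬ IsPt l (m + cntV l m) := enum_not_pt hP.hl m
      have := (hpt_iff ⟨m + cntV l m, hposlt m hm⟩).not.mp (by simpa using hnp)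
      simp at this ⊢
      omega
    set f : Fin M → ℕ := fun m => ((π ⟨(m : ℕ) + cntV l m, hposlt m m.isLt⟩ : Fin n) : ℕ) with hf
    set g : Fin M → ℕ := fun m => (m : ℕ) + cntV r m with hg
    have hfmono : StrictMono f := by
      intro a b hab
      rw [hf]
      apply fills_mono π hA _ (hposnonexc a a.isLt) (hposnonexc b b.isLt)
      rw [Fin.lt_def]
      simp only [Fin.val_mk]
      exact enum_strictMono l hab
    have hgmono : StrictMono g := fun a b hab => enum_strictMono r hab
    have hfY : ∀ m, f m ∈ Y := by
      intro m
      rw [hmemY]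
      refine ⟨(π _).isLt, ?_⟩
      rintro ⟨j, hj, hjeq⟩
      rw [hlen2] at hj
      rw [hrpt j hj] at hjeq
      have hthis : π ((ExcList π).get ⟨j, hj⟩) = π ⟨(m : ℕ) + cntV l (m : ℕ), hposlt (m : ℕ) m.isLt⟩ :=
        Fin.ext hjeq
      have heq := π.injective hthis
      have h1 := hposnonexc (m : ℕ) m.isLt
      have h2 : pE π ⟨j, hj⟩ ≤ vE π ⟨j, hj⟩ := pE_le_vE _
      unfold pE vE at h2
      rw [heq] at h2
      simp only [Fin.val_mk] at h2
      omega
    have hgY : ∀ m, g m ∈ Y := by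
      intro m
      rw [hmemY]
      constructor
      · show (m : ℕ) + cntV r (m : ℕ) < n
        have := cntV_le_length r (m : ℕ)
        rw [hlen2] at this
        have := m.isLt
        omega
      · exact enum_not_pt hP.hr (m : ℕ)
    have hfg := enum_unique hfmono hgmono hYcard hfY hgY
    -- now identify x with the m-th non-point
    obtain ⟨hix, hcv⟩ := nonpt_decomp hP.hl hnpt
    set m := (x : ℕ) - cntP l (x : ℕ) with hm
    have hxm : (x : ℕ) = m + cntV l m := by omega
    have hmM : m < M := by
      by_contra hc
      push_neg at hc
      have hidx : s - 1 < s := by omega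
      have hcnt : cntV l m = s := by
        have hle : cntV l m ≤ s := by rw [← hlen1]; exact cntV_le_length l m
        have hall : ∀ t, t < s → t < cntV l m := by
          intro t ht
          apply (lt_cntV_iff hP.hl (by rw [hlen1]; exact ht)).mpr
          have hmono := hP.hl t (s-1) (by omega) (by rw [hlen1]; omega)
          have h1 : l.getD (s-1) 0 + (s-1) = pE π ⟨s-1, hidx⟩ := hlpt (s-1) hidx
          have h2 : pE π ⟨s-1, hidx⟩ < n := pE_lt_n _
          omega
        have := hall (s-1) hidx
        omega
      have := x.isLt
      omega
    have hFm : Fm l r (x : ℕ) = g ⟨m, hmM⟩ := by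
      rw [Fm_nonpt hP.hl hnpt, hg]
    rw [hFm, ← hfg ⟨m, hmM⟩, hf]
    simp only [Fin.val_mk]
    congr 1
    apply congrArg
    exact Fin.ext (by simp [← hxm])
  · -- excedance: point case
    obtain ⟨t, ht⟩ := List.mem_iff_get.mp (mem_ExcList.mpr hexc)
    have hxval : (x : ℕ) = l.getD (t : ℕ) 0 + (t : ℕ) := by
      rw [hlpt _ t.isLt]
      unfold pE
      rw [show (⟨(t : ℕ), t.isLt⟩ : Fin s) = t from Fin.ext rfl, ht]
    rw [hxval, Fm_pt hP.hl (by rw [hlen1]; exact t.isLt)]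
    rw [hrpt _ t.isLt]
    unfold vE
    rw [show (⟨(t : ℕ), t.isLt⟩ : Fin s) = t from Fin.ext rfl, ht]

/-- the size is recovered -/
lemma N_phi (hI : Indecomposable π) (hA : Avoids321 π) (hn : 1 < n) :
    N (Phi ⟨n, π⟩).1 (Phi ⟨n, π⟩).2 = n := by
  rw [Phi_eq π hn]
  dsimp only
  set s := (ExcList π).length with hs
  have hs0 : 0 < s := ExcList_length_pos (by omega)
  have hlen2 : (List.ofFn (fun j : Fin s => vE π j - (j : ℕ))).length = s := List.length_ofFn
  rw [N_eq (by rw [hlen2]; exact hs0), hlen2]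
  have hidx : s - 1 < s := by omega
  rw [getD_ofFn _ hidx]
  have h1 : vE π ⟨s - 1, hidx⟩ = n - 1 :=
    vE_last (by omega) hA rfl
  have h2 := vE_ge hA (π := π) ⟨s - 1, hidx⟩
  simp only [Fin.val_mk] at h1 h2 ⊢
  omega

end Reconstruct


lemma pt_lt_N {l r : List ℕ} (P : Poly l r) {j : ℕ} (hj : j < l.length) :
    l.getD j 0 + j < N l r := by
  have hrs : 0 < r.length := by have := P.hlen; omega
  rw [N_eq hrs]
  have h1 := P.hl j (l.length - 1) (by omega) (by omega)
  have h2 := P.hlr (l.length - 1) (by omega)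
  have hLR := P.hlen
  rw [← hLR]
  omega

lemma N_ge_two {l r : List ℕ} (P : Poly l r) (hs : 0 < l.length) : 2 ≤ N l r := by
  have hrs : 0 < r.length := by have := P.hlen; omega
  rw [N_eq hrs]
  have h2 := P.hlr (l.length - 1) (by omega)
  have hLR := P.hlen
  rw [← hLR]
  omega

lemma phi_psi {l r : List ℕ} (P : Poly l r) :
    Phi ⟨N l r, PsiPerm l r P⟩ = (l, r) := by
  rcases Nat.eq_zero_or_pos l.length with hs | hs
  · have hl0 : l = [] := List.length_eq_zero_iff.mp hs
    have hr0 : r = [] := List.length_eq_zero_iff.mp (by rw [← P.hlen]; exact hs)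
    simp only [Phi]
    rw [if_pos]
    · rw [hl0, hr0]
    · show N l r ≤ 1
      rw [hl0, hr0]
      simp [N]
  · have hN2 : 2 ≤ N l r := N_ge_two P hs
    set π := PsiPerm l r P with hπ
    rw [Phi_eq π (by omega)]
    have hiff : ∀ x : Fin (N l r), ((x : ℕ) ≤ ((π x : Fin (N l r)) : ℕ)) ↔ IsPt l (x : ℕ) := by
      intro x
      constructor
      · intro hx
        by_contra hc
        have := P.nonpt_def x.isLt hs hc
        rw [hπ, PsiPerm_apply] at hx
        omega
      · rintro ⟨j, hj, hjeq⟩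
        rw [hπ, PsiPerm_apply, ← hjeq, Fm_pt P.hl hj]
        have := P.hlr j hj
        omega
    have hE : ExcList π = List.ofFn (fun j : Fin l.length =>
        (⟨l.getD (j : ℕ) 0 + (j : ℕ), pt_lt_N P j.isLt⟩ : Fin (N l r))) := by
      have hpair2 : (List.ofFn (fun j : Fin l.length =>
          (⟨l.getD (j : ℕ) 0 + (j : ℕ), pt_lt_N P j.isLt⟩ : Fin (N l r)))).Pairwise (· < ·) := by
        rw [List.pairwise_iff_get]
        intro i j hij
        rw [List.get_ofFn, List.get_ofFn, Fin.lt_def]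
        simp only [Fin.val_mk, Fin.coe_cast]
        apply pt_strictMono P.hl
        · rw [Fin.lt_def] at hij
          simpa using hij
        · have hj := j.isLt
          have hl2 := List.length_ofFn (f := fun j : Fin l.length =>
            (⟨l.getD (j : ℕ) 0 + (j : ℕ), pt_lt_N P j.isLt⟩ : Fin (N l r)))
          omega
      refine (fun hp h1 h2 => List.Perm.eq_of_pairwise' (r := (· ≤ ·)) h1 h2 hp) ?_ ?_ ?_
      · apply List.perm_of_nodup_nodup_toFinset_eq
        · exact (ExcList_pairwise (π := π)).imp (fun h => ne_of_lt h)
        · exact hpair2.imp (fun h => ne_of_lt h)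
        · ext x
          rw [List.mem_toFinset, List.mem_toFinset, mem_ExcList, hiff, List.mem_ofFn]
          constructor
          · rintro ⟨j, hj, hjeq⟩
            exact ⟨⟨j, hj⟩, Fin.ext (by simpa using hjeq)⟩
          · rintro ⟨j, hjeq⟩
            exact ⟨(j : ℕ), j.isLt, by rw [← Fin.ext_iff.mp hjeq]⟩
      · exact (ExcList_pairwise (π := π)).imp (fun h => le_of_lt h)
      · exact hpair2.imp (fun h => le_of_lt h)
    have hgetE : ∀ (j : ℕ) (hj : j < (ExcList π).length) (hj2 : j < l.length),
        (((ExcList π).get ⟨j, hj⟩ : Fin (N l r)) : ℕ) = l.getD j 0 + j := by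
      intro j hj hj2
      rw [List.get_of_eq hE ⟨j, hj⟩, List.get_ofFn]
      simp
    have hlenE : (ExcList π).length = l.length := by
      rw [hE, List.length_ofFn]
    apply Prod.ext
    · dsimp only
      apply List.ext_getElem
      · rw [List.length_ofFn, hlenE]
      · intro i h1 h2
        rw [List.length_ofFn] at h1
        rw [← List.getD_eq_getElem _ 0, ← List.getD_eq_getElem _ 0,
          getD_ofFn _ h1]
        unfold pE
        rw [hgetE i h1 (by omega : i < l.length)]
        simp only [Fin.val_mk]
        omega
    · dsimp only
      apply List.ext_getElem
      · rw [List.length_ofFn, hlenE]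
        exact P.hlen
      · intro i h1 h2
        rw [List.length_ofFn] at h1
        rw [← List.getD_eq_getElem _ 0, ← List.getD_eq_getElem _ 0,
          getD_ofFn _ h1]
        unfold vE
        have hi2 : i < l.length := by omega
        have hget : (ExcList π).get ⟨i, h1⟩ = ⟨l.getD i 0 + i, pt_lt_N P hi2⟩ :=
          Fin.ext (by rw [hgetE i h1 hi2])
        rw [hget]
        have happ : ((π (⟨l.getD i 0 + i, pt_lt_N P hi2⟩ : Fin (N l r)) : Fin (N l r)) : ℕ)
            = r.getD i 0 + i := by
          rw [hπ, PsiPerm_apply]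
          exact Fm_pt P.hl hi2
        rw [happ]
        simp only [Fin.val_mk]
        omega

lemma sigma_perm_ext {m n : ℕ} (σ : Equiv.Perm (Fin m)) (τ : Equiv.Perm (Fin n)) (h : m = n)
    (hfun : ∀ x : Fin m, ((σ x : Fin m) : ℕ) = ((τ (Fin.cast h x) : Fin n) : ℕ)) :
    (⟨m, σ⟩ : Σ k : ℕ, Equiv.Perm (Fin k)) = ⟨n, τ⟩ := by
  subst h
  simp only [Sigma.mk.inj_iff, heq_eq_eq, true_and]
  ext x
  have := hfun x
  rw [Fin.cast_refl] at this
  exact this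

lemma PsiPerm_inversions {l r : List ℕ} {k : ℕ} (hp : IsPPolyomino k l r) :
    inversions (PsiPerm l r (poly_of_isP hp)) = k := by
  set P := poly_of_isP hp with hP
  have h1 := phi_isP (PsiPerm_indec P) (PsiPerm_avoids P)
  rw [phi_psi P] at h1
  have h2 := h1.2.2.2.2.2.2
  have h3 := hp.2.2.2.2.2.2
  dsimp only at h2
  omega

/-- the bijection, polyomino → permutation -/
noncomputable def G (k : ℕ) (p : {pr : List ℕ × List ℕ // IsPPolyomino k pr.1 pr.2}) :
    {q : Σ n : ℕ, Equiv.Perm (Fin n) //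
        Indecomposable q.2 ∧ inversions q.2 = k ∧ Avoids321 q.2} :=
  ⟨⟨N p.1.1 p.1.2, PsiPerm p.1.1 p.1.2 (poly_of_isP p.2)⟩,
    PsiPerm_indec (poly_of_isP p.2), PsiPerm_inversions p.2, PsiPerm_avoids (poly_of_isP p.2)⟩

lemma G_bijective (k : ℕ) : Function.Bijective (G k) := by
  constructor
  · intro p1 p2 h
    have hval : (G k p1).1 = (G k p2).1 := by rw [h]
    have h1 : Phi (G k p1).1 = p1.1 := phi_psi (poly_of_isP p1.2)
    have h2 : Phi (G k p2).1 = p2.1 := phi_psi (poly_of_isP p2.2)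
    apply Subtype.ext
    rw [← h1, ← h2]
    rw [hval]
  · rintro ⟨⟨n, π⟩, hI, hk, hA⟩
    dsimp only at hI hk hA
    have hp : IsPPolyomino k (Phi ⟨n, π⟩).1 (Phi ⟨n, π⟩).2 := by
      rw [← hk]
      exact phi_isP hI hA
    refine ⟨⟨Phi ⟨n, π⟩, hp⟩, ?_⟩
    apply Subtype.ext
    dsimp only [G]
    rcases le_or_gt n 1 with hn | hn
    · -- n = 1
      have hn1 : n = 1 := by have := hI.1; omega
      have hphi : Phi ⟨n, π⟩ = ([], []) := by simp only [Phi]; rw [if_pos hn]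
      have hN1 : N (Phi ⟨n, π⟩).1 (Phi ⟨n, π⟩).2 = n := by
        rw [hphi]
        show N [] [] = n
        rw [N]
        simp [hn1]
      apply sigma_perm_ext _ _ hN1
      intro x
      have hx1 := ((PsiPerm (Phi ⟨n, π⟩).1 (Phi ⟨n, π⟩).2 (poly_of_isP hp)) x).isLt
      have hx2 := (π (Fin.cast hN1 x)).isLt
      omega
    · apply sigma_perm_ext _ _ (N_phi hI hA hn)
      intro x
      rw [PsiPerm_apply]
      have := psi_phi hI hA hn (Fin.cast (N_phi hI hA hn) x)
      simp only [Fin.coe_cast] at this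
      rw [this]

end PP

/-- The number of indecomposable permutations with exactly `k` inversions avoiding
321 equals the number of parallelogram polyominoes with `k` cells. -/
theorem card_indecomposable_avoids321_eq_polyominoes (k : ℕ) :
    Nat.card {p : Σ n : ℕ, Equiv.Perm (Fin n) //
        Indecomposable p.2 ∧ inversions p.2 = k ∧ Avoids321 p.2}
      = {pr : List ℕ × List ℕ | IsPPolyomino k pr.1 pr.2}.ncard := by
  rw [← Nat.card_coe_set_eq]
  exact Nat.card_congr (Equiv.ofBijective (PP.G k) (PP.G_bijective k)).symm
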